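/- Let A ∈ {0,1} and Z be jointly distributed random variables, and let Â be any {0,1}-valued random variable with A conditionally independent of Â given Z. Then Pr(A ≠ Â) ≥ H₂⁻¹( H(A | Z) ), where H₂⁻¹ is the inverse of the binary entropy function restricted to [0, 1/2]. -/

import Mathlib

open MeasureTheory ProbabilityTheory
open scoped ENNReal

/-- Binary entropy in bits (base-2 logarithm, with the convention `0 logb 0 = 0`). -/
noncomputable def binEnt2 (p : ℝ) : ℝ :=
  -(p * Real.logb 2 p) - (1 - p) * Real.logb 2 (1 - p)

/-- The inverse of the binary entropy function `H₂ : [0, 1/2] → [0, 1]`. -/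
noncomputable def invBinEnt2 (s : ℝ) : ℝ :=
  sInf {p : ℝ | p ∈ Set.Icc (0:ℝ) (1/2) ∧ binEnt2 p = s}

/-- Conditional Shannon entropy `H(A | Z)` (in bits) of the binary attribute `A`
given the discrete representation `Z`. -/
noncomputable def condEnt2 {Ω 𝒵 : Type*} [MeasurableSpace Ω] (μ : Measure Ω)
    (A : Ω → Bool) (Z : Ω → 𝒵) : ℝ :=
  ∑' z : 𝒵, (μ {ω | Z ω = z}).toReal *
    binEnt2 ((ProbabilityTheory.cond μ {ω | Z ω = z}) {ω | A ω = true}).toReal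

lemma binEnt2_eq (p : ℝ) : binEnt2 p = Real.binEntropy p / Real.log 2 := by
  simp only [binEnt2, Real.binEntropy, Real.logb, Real.log_inv]
  ring

lemma binEnt2_zero : binEnt2 0 = 0 := by simp [binEnt2]
lemma binEnt2_one : binEnt2 1 = 0 := by simp [binEnt2]

lemma binEnt2_one_sub (p : ℝ) : binEnt2 (1 - p) = binEnt2 p := by
  rw [binEnt2_eq, binEnt2_eq, Real.binEntropy_one_sub]

lemma binEnt2_nonneg {p : ℝ} (h0 : 0 ≤ p) (h1 : p ≤ 1) : 0 ≤ binEnt2 p := by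
  rw [binEnt2_eq]
  exact div_nonneg (Real.binEntropy_nonneg h0 h1) (Real.log_nonneg one_le_two)

lemma binEnt2_continuous : Continuous binEnt2 := by
  simp only [funext binEnt2_eq]
  exact Real.binEntropy_continuous.div_const _

lemma gibbs_aux {q t : ℝ} (hq0 : 0 < q) (ht0 : 0 < t) :
    q * Real.log t - q * Real.log q ≤ t - q := by
  have h := Real.log_le_sub_one_of_pos (show 0 < t/q by positivity)
  rw [Real.log_div (ne_of_gt ht0) (ne_of_gt hq0)] at h
  have h2 := mul_le_mul_of_nonneg_left h hq0.le
  have : q * (t / q - 1) = t - q := by field_simp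
  nlinarith

lemma gibbs2 {q t : ℝ} (hq0 : 0 ≤ q) (hq1 : q ≤ 1) (ht0 : 0 < t) (ht1 : t < 1) :
    binEnt2 q ≤ -(q * Real.logb 2 t) - (1 - q) * Real.logb 2 (1 - t) := by
  have hlog2 : (0:ℝ) < Real.log 2 := Real.log_pos one_lt_two
  have key : Real.binEntropy q ≤ -(q * Real.log t) - (1 - q) * Real.log (1 - t) := by
    rw [Real.binEntropy, Real.log_inv, Real.log_inv]
    rcases eq_or_lt_of_le hq0 with h0 | h0
    · have : Real.log (1 - t) ≤ 0 := Real.log_nonpos (by linarith) (by linarith)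
      rw [← h0]; simp; linarith
    rcases eq_or_lt_of_le hq1 with h1 | h1
    · have : Real.log t ≤ 0 := Real.log_nonpos ht0.le ht1.le
      rw [h1]; simp; linarith
    · have A := gibbs_aux h0 ht0
      have B := gibbs_aux (show (0:ℝ) < 1 - q by linarith) (show (0:ℝ) < 1 - t by linarith)
      nlinarith
  rw [binEnt2_eq, Real.logb, Real.logb]
  rw [div_le_iff₀ hlog2]
  calc Real.binEntropy q ≤ -(q * Real.log t) - (1 - q) * Real.log (1 - t) := key
    _ = (-(q * (Real.log t / Real.log 2)) - (1 - q) * (Real.log (1 - t) / Real.log 2)) *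
        Real.log 2 := by field_simp

lemma invBinEnt2_le {s t : ℝ} (ht0 : 0 ≤ t) (ht : t ≤ 1/2) (hs0 : 0 ≤ s)
    (hs : s ≤ binEnt2 t) : invBinEnt2 s ≤ t := by
  have hc : ContinuousOn binEnt2 (Set.Icc 0 t) := binEnt2_continuous.continuousOn
  have hiv := intermediate_value_Icc ht0 hc
  have hmem : s ∈ Set.Icc (binEnt2 0) (binEnt2 t) := by
    rw [binEnt2_zero]; exact ⟨hs0, hs⟩
  obtain ⟨p, hp, hps⟩ := hiv hmem
  have h1 : invBinEnt2 s ≤ p := by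
    apply csInf_le ⟨0, fun x hx => hx.1.1⟩
    exact ⟨⟨hp.1, le_trans hp.2 ht⟩, hps⟩
  linarith [hp.2]

/-- for binary `A` and any estimator `Â` conditionally independent of `A`
given `Z`, `Pr(A ≠ Â) ≥ H₂⁻¹(H(A | Z))`, where `H₂⁻¹` is the inverse of the binary
entropy function restricted to `[0, 1/2]`. -/
theorem error_ge_invBinEnt
    {Ω 𝒵 : Type*} [MeasurableSpace Ω] [MeasurableSpace 𝒵]
    [MeasurableSingletonClass 𝒵] [Countable 𝒵]
    (μ : Measure Ω) [IsProbabilityMeasure μ]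
    (A Ahat : Ω → Bool) (Z : Ω → 𝒵)
    (hA : Measurable A) (hAhat : Measurable Ahat) (hZ : Measurable Z)
    (hcondindep : ∀ (z : 𝒵) (a b : Bool),
      μ {ω | A ω = a ∧ Ahat ω = b ∧ Z ω = z} * μ {ω | Z ω = z}
        = μ {ω | A ω = a ∧ Z ω = z} * μ {ω | Ahat ω = b ∧ Z ω = z}) :
    invBinEnt2 (condEnt2 μ A Z) ≤ (μ {ω | A ω ≠ Ahat ω}).toReal := by
  classical
  set f : 𝒵 → ℝ≥0∞ := fun z => μ {ω | Z ω = z} with hf_def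
  set g : 𝒵 → ℝ≥0∞ := fun z => μ {ω | A ω = true ∧ Z ω = z} with hg_def
  set e : 𝒵 → ℝ≥0∞ := fun z => μ {ω | A ω ≠ Ahat ω ∧ Z ω = z} with he_def
  set m : 𝒵 → ℝ≥0∞ := fun z => min (g z) (f z - g z) with hm_def
  have hZm : ∀ z, MeasurableSet {ω | Z ω = z} := fun z => hZ (measurableSet_singleton z)
  have hBm : ∀ (X : Ω → Bool), Measurable X → ∀ b, MeasurableSet {ω | X ω = b} :=
    fun X hX b => hX (measurableSet_singleton b)
  have hNe : MeasurableSet {ω | A ω ≠ Ahat ω} := by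
    have h1 : {ω | A ω = Ahat ω} = ({ω | A ω = true} ∩ {ω | Ahat ω = true}) ∪
        ({ω | A ω = false} ∩ {ω | Ahat ω = false}) := by
      ext ω
      simp only [Set.mem_setOf_eq, Set.mem_union, Set.mem_inter_iff]
      cases h : A ω <;> cases h' : Ahat ω <;> simp
    have h2 : MeasurableSet {ω | A ω = Ahat ω} := by
      rw [h1]
      exact ((hBm A hA true).inter (hBm Ahat hAhat true)).union
        ((hBm A hA false).inter (hBm Ahat hAhat false))
    have h3 : {ω | A ω ≠ Ahat ω} = {ω | A ω = Ahat ω}ᶜ := rfl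
    rw [h3]; exact h2.compl
  have hpart : ∀ s : Set Ω, MeasurableSet s → μ s = ∑' z, μ (s ∩ {ω | Z ω = z}) := by
    intro s hs
    have hu : s = ⋃ z, s ∩ {ω | Z ω = z} := by ext ω; simp
    calc μ s = μ (⋃ z, s ∩ {ω | Z ω = z}) := by rw [← hu]
      _ = ∑' z, μ (s ∩ {ω | Z ω = z}) := by
          refine measure_iUnion ?_ (fun z => hs.inter (hZm z))
          intro i j hij
          refine Set.disjoint_left.2 (fun ω h1 h2 => hij ?_)
          exact h1.2.symm.trans h2.2
  have hf1 : ∑' z, f z = 1 := by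
    have h := hpart Set.univ MeasurableSet.univ
    simp only [Set.univ_inter, measure_univ] at h
    exact h.symm
  have heE : ∑' z, e z = μ {ω | A ω ≠ Ahat ω} := by
    have h := hpart {ω | A ω ≠ Ahat ω} hNe
    have h2 : ∀ z, {ω | A ω ≠ Ahat ω} ∩ {ω | Z ω = z} = {ω | A ω ≠ Ahat ω ∧ Z ω = z} := by
      intro z; rfl
    simp only [h2] at h
    exact h.symm
  have hgf : ∀ z, g z ≤ f z := fun z => measure_mono (fun ω h => h.2)
  have hme : ∀ z, m z ≤ e z := by
    intro z
    rcases eq_or_ne (f z) 0 with h0 | h0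
    · calc m z ≤ g z := min_le_left _ _
        _ ≤ f z := hgf z
        _ = 0 := h0
        _ ≤ e z := zero_le
    · rw [← ENNReal.mul_le_mul_iff_left h0 (measure_ne_top μ _)]
      have hAfZ : μ {ω | A ω = false ∧ Z ω = z} = f z - g z := by
        have hset : {ω | A ω = true ∧ Z ω = z} ∪ {ω | A ω = false ∧ Z ω = z}
            = {ω | Z ω = z} := by
          ext ω; simp only [Set.mem_union, Set.mem_setOf_eq]
          cases h : A ω <;> simp
        have hdisj : Disjoint {ω | A ω = true ∧ Z ω = z} {ω | A ω = false ∧ Z ω = z} := by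
          refine Set.disjoint_left.2 (fun ω h1 h2 => ?_)
          simp only [Set.mem_setOf_eq] at h1 h2
          rw [h1.1] at h2; exact Bool.noConfusion h2.1
        have hmu := measure_union (μ := μ) hdisj
          (show MeasurableSet {ω | A ω = false ∧ Z ω = z} from (hBm A hA false).inter (hZm z))
        rw [hset] at hmu
        have hsum : g z + μ {ω | A ω = false ∧ Z ω = z} = f z := hmu.symm
        rw [← hsum, ENNReal.add_sub_cancel_left (measure_ne_top μ _)]
      have hd2 : μ {ω | Ahat ω = true ∧ Z ω = z} + μ {ω | Ahat ω = false ∧ Z ω = z} = f z := by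
        have hset : {ω | Ahat ω = true ∧ Z ω = z} ∪ {ω | Ahat ω = false ∧ Z ω = z}
            = {ω | Z ω = z} := by
          ext ω; simp only [Set.mem_union, Set.mem_setOf_eq]
          cases h : Ahat ω <;> simp
        have hdisj : Disjoint {ω | Ahat ω = true ∧ Z ω = z} {ω | Ahat ω = false ∧ Z ω = z} := by
          refine Set.disjoint_left.2 (fun ω h1 h2 => ?_)
          simp only [Set.mem_setOf_eq] at h1 h2
          rw [h1.1] at h2; exact Bool.noConfusion h2.1
        have hmu := measure_union (μ := μ) hdisj
          (show MeasurableSet {ω | Ahat ω = false ∧ Z ω = z} from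
            (hBm Ahat hAhat false).inter (hZm z))
        rw [hset] at hmu
        exact hmu.symm
      have he2 : e z = μ {ω | A ω = true ∧ Ahat ω = false ∧ Z ω = z}
          + μ {ω | A ω = false ∧ Ahat ω = true ∧ Z ω = z} := by
        have hset : {ω | A ω = true ∧ Ahat ω = false ∧ Z ω = z}
            ∪ {ω | A ω = false ∧ Ahat ω = true ∧ Z ω = z} = {ω | A ω ≠ Ahat ω ∧ Z ω = z} := by
          ext ω; simp only [Set.mem_union, Set.mem_setOf_eq]
          cases h : A ω <;> cases h' : Ahat ω <;> simp
        have hdisj : Disjoint {ω | A ω = true ∧ Ahat ω = false ∧ Z ω = z}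
            {ω | A ω = false ∧ Ahat ω = true ∧ Z ω = z} := by
          refine Set.disjoint_left.2 (fun ω h1 h2 => ?_)
          simp only [Set.mem_setOf_eq] at h1 h2
          rw [h1.1] at h2; exact Bool.noConfusion h2.1
        have hmu := measure_union (μ := μ) hdisj
          (show MeasurableSet {ω | A ω = false ∧ Ahat ω = true ∧ Z ω = z} from
            (hBm A hA false).inter ((hBm Ahat hAhat true).inter (hZm z)))
        rw [hset] at hmu
        exact hmu
      calc m z * f z = m z * μ {ω | Ahat ω = true ∧ Z ω = z}
            + m z * μ {ω | Ahat ω = false ∧ Z ω = z} := by rw [← mul_add, hd2]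
        _ ≤ (f z - g z) * μ {ω | Ahat ω = true ∧ Z ω = z}
            + g z * μ {ω | Ahat ω = false ∧ Z ω = z} :=
            add_le_add (mul_le_mul_left (min_le_right _ _) _)
              (mul_le_mul_left (min_le_left _ _) _)
        _ = μ {ω | A ω = false ∧ Z ω = z} * μ {ω | Ahat ω = true ∧ Z ω = z}
            + μ {ω | A ω = true ∧ Z ω = z} * μ {ω | Ahat ω = false ∧ Z ω = z} := by
            rw [hAfZ]
        _ = μ {ω | A ω = false ∧ Ahat ω = true ∧ Z ω = z} * f z
            + μ {ω | A ω = true ∧ Ahat ω = false ∧ Z ω = z} * f z := by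
            rw [← hcondindep z false true, ← hcondindep z true false]
        _ = e z * f z := by rw [he2]; ring
  have h2m : ∀ z, 2 * m z ≤ f z := by
    intro z
    calc 2 * m z = m z + m z := two_mul _
      _ ≤ (f z - g z) + g z := add_le_add (min_le_right _ _) (min_le_left _ _)
      _ = f z := tsub_add_cancel_of_le (hgf z)
  -- real versions
  have hm_le_f : ∀ z, m z ≤ f z := fun z => le_trans (min_le_left _ _) (hgf z)
  have hsum_m_le : ∑' z, m z ≤ μ {ω | A ω ≠ Ahat ω} := heE ▸ ENNReal.tsum_le_tsum hme
  have hsum_m_ne_top : ∑' z, m z ≠ ∞ := (hsum_m_le.trans_lt (measure_lt_top μ _)).ne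
  have h2S : (2:ℝ≥0∞) * ∑' z, m z ≤ 1 := by
    rw [← ENNReal.tsum_mul_left, ← hf1]
    exact ENNReal.tsum_le_tsum h2m
  have hFsum : Summable (fun z => (f z).toReal) :=
    ENNReal.summable_toReal (by rw [hf1]; exact ENNReal.one_ne_top)
  have hMsum : Summable (fun z => (m z).toReal) := ENNReal.summable_toReal hsum_m_ne_top
  set S : ℝ := ∑' z, (m z).toReal with hS_def
  have hS_eq : S = (∑' z, m z).toReal :=
    (ENNReal.tsum_toReal_eq (fun z => ((hm_le_f z).trans_lt (measure_lt_top μ _)).ne)).symm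
  have hS_le_E : S ≤ (μ {ω | A ω ≠ Ahat ω}).toReal := by
    rw [hS_eq]; exact ENNReal.toReal_mono (measure_ne_top μ _) hsum_m_le
  have hS_half : S ≤ 1/2 := by
    have h := ENNReal.toReal_mono ENNReal.one_ne_top h2S
    rw [ENNReal.toReal_mul] at h
    simp only [ENNReal.toReal_ofNat, ENNReal.toReal_one] at h
    rw [hS_eq]; linarith
  set p : 𝒵 → ℝ :=
    fun z => ((ProbabilityTheory.cond μ {ω | Z ω = z}) {ω | A ω = true}).toReal with hp_def
  have hCE : condEnt2 μ A Z = ∑' z, (f z).toReal * binEnt2 (p z) := rfl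
  have hp_eq : ∀ z, f z ≠ 0 → p z = (g z).toReal / (f z).toReal := by
    intro z h0
    have hset : {ω | Z ω = z} ∩ {ω | A ω = true} = {ω | A ω = true ∧ Z ω = z} := by
      ext ω
      simp only [Set.mem_inter_iff, Set.mem_setOf_eq]
      exact and_comm
    have hc : (ProbabilityTheory.cond μ {ω | Z ω = z}) {ω | A ω = true} = (f z)⁻¹ * g z := by
      rw [ProbabilityTheory.cond_apply (hZm z), hset]
    show ((ProbabilityTheory.cond μ {ω | Z ω = z}) {ω | A ω = true}).toReal = _
    rw [hc, ENNReal.toReal_mul, ENNReal.toReal_inv]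
    rw [inv_mul_eq_div]
  have hbq : ∀ x : ℝ, binEnt2 x = binEnt2 (min x (1-x)) := by
    intro x; rcases le_total x (1-x) with h | h
    · rw [min_eq_left h]
    · rw [min_eq_right h, binEnt2_one_sub]
  have hnn : ∀ z, 0 ≤ (f z).toReal * binEnt2 (p z) := by
    intro z
    rcases eq_or_ne (f z) 0 with h0 | h0
    · rw [h0]; simp
    · refine mul_nonneg ENNReal.toReal_nonneg (binEnt2_nonneg ENNReal.toReal_nonneg ?_)
      rw [hp_eq z h0]
      exact (div_le_one (ENNReal.toReal_pos h0 (measure_ne_top μ _))).2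
        (ENNReal.toReal_mono (measure_ne_top μ _) (hgf z))
  have hFtot : ∑' z, (f z).toReal = 1 := by
    rw [← ENNReal.tsum_toReal_eq (fun z => measure_ne_top μ _), hf1, ENNReal.toReal_one]
  rcases eq_or_lt_of_le (ENNReal.toReal_nonneg :
      (0:ℝ) ≤ (μ {ω | A ω ≠ Ahat ω}).toReal) with hE0 | hE0
  · -- zero-error case
    have hE0' : μ {ω | A ω ≠ Ahat ω} = 0 := by
      rcases (ENNReal.toReal_eq_zero_iff _).1 hE0.symm with h | h
      · exact h
      · exact absurd h (measure_ne_top μ _)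
    have hterm : ∀ z, (f z).toReal * binEnt2 (p z) = 0 := by
      intro z
      rcases eq_or_ne (f z) 0 with h0 | h0
      · rw [h0]; simp
      · have hez : e z = 0 := by
          refine le_antisymm ?_ zero_le
          calc e z ≤ ∑' z, e z := ENNReal.le_tsum z
            _ = 0 := by rw [heE, hE0']
        have hmz : m z = 0 := le_antisymm ((hme z).trans hez.le) zero_le
        have hF_pos : 0 < (f z).toReal := ENNReal.toReal_pos h0 (measure_ne_top μ _)
        rcases le_total (g z) (f z - g z) with h | h
        · have hg0 : g z = 0 := by
            have : m z = g z := min_eq_left h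
            rw [← this, hmz]
          have hpz : p z = 0 := by rw [hp_eq z h0, hg0]; simp
          rw [hpz, binEnt2_zero, mul_zero]
        · have hfg : f z - g z = 0 := by
            have : m z = f z - g z := min_eq_right h
            rw [← this, hmz]
          have hgf' : g z = f z := le_antisymm (hgf z) (tsub_eq_zero_iff_le.1 hfg)
          have hpz : p z = 1 := by
            rw [hp_eq z h0, hgf']
            exact div_self hF_pos.ne'
          rw [hpz, binEnt2_one, mul_zero]
    have hCE0 : condEnt2 μ A Z = 0 := by
      rw [hCE]
      simp only [hterm]
      exact tsum_zero
    rw [← hE0, hCE0]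
    exact invBinEnt2_le le_rfl (by norm_num) le_rfl (le_of_eq binEnt2_zero.symm)
  · -- positive-error case
    set t : ℝ := min (μ {ω | A ω ≠ Ahat ω}).toReal (1/2) with ht_def
    have ht0 : 0 < t := lt_min hE0 (by norm_num)
    have ht : t ≤ 1/2 := min_le_right _ _
    have ht1 : t < 1 := lt_of_le_of_lt ht (by norm_num)
    set L1 : ℝ := Real.logb 2 t with hL1_def
    set L2 : ℝ := Real.logb 2 (1 - t) with hL2_def
    have hL : L1 ≤ L2 := by
      rw [hL1_def, hL2_def, Real.logb, Real.logb]
      have hlog := Real.log_le_log ht0 (by linarith : t ≤ 1 - t)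
      have hlog2 : (0:ℝ) < Real.log 2 := Real.log_pos one_lt_two
      exact div_le_div_of_nonneg_right hlog hlog2.le
    have key : ∀ z, (f z).toReal * binEnt2 (p z)
        ≤ (L2 - L1) * (m z).toReal + (-L2) * (f z).toReal := by
      intro z
      rcases eq_or_ne (f z) 0 with h0 | h0
      · have hmz : m z = 0 :=
          le_antisymm (le_trans (min_le_left _ _) (le_trans (hgf z) h0.le)) zero_le
        rw [h0, hmz]; simp
      · have hF_pos : 0 < (f z).toReal := ENNReal.toReal_pos h0 (measure_ne_top μ _)
        have hG_le_F : (g z).toReal ≤ (f z).toReal :=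
          ENNReal.toReal_mono (measure_ne_top μ _) (hgf z)
        have hpz : p z = (g z).toReal / (f z).toReal := hp_eq z h0
        have hp0 : 0 ≤ p z := ENNReal.toReal_nonneg
        have hp1 : p z ≤ 1 := by rw [hpz]; exact (div_le_one hF_pos).2 hG_le_F
        have hq0 : 0 ≤ min (p z) (1 - p z) := le_min hp0 (by linarith)
        have hq1 : min (p z) (1 - p z) ≤ 1 := le_trans (min_le_left _ _) hp1
        have hMz : (m z).toReal = min (g z).toReal ((f z).toReal - (g z).toReal) := by
          show (min (g z) (f z - g z)).toReal = _
          rw [ENNReal.toReal_min (measure_ne_top μ _)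
            ((tsub_le_self.trans_lt (measure_lt_top μ _)).ne),
            ENNReal.toReal_sub_of_le (hgf z) (measure_ne_top μ _)]
        have h1 : (f z).toReal * p z = (g z).toReal := by
          rw [hpz]; field_simp
        have hFq : (f z).toReal * min (p z) (1 - p z) = (m z).toReal := by
          rw [mul_min_of_nonneg _ _ hF_pos.le, mul_one_sub, h1, hMz]
        have hgibbs := gibbs2 hq0 hq1 ht0 ht1
        calc (f z).toReal * binEnt2 (p z)
            = (f z).toReal * binEnt2 (min (p z) (1 - p z)) := by rw [← hbq (p z)]
          _ ≤ (f z).toReal * (-(min (p z) (1 - p z) * L1) - (1 - min (p z) (1 - p z)) * L2) :=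
              mul_le_mul_of_nonneg_left hgibbs hF_pos.le
          _ = (L2 - L1) * ((f z).toReal * min (p z) (1 - p z)) + (-L2) * (f z).toReal := by ring
          _ = (L2 - L1) * (m z).toReal + (-L2) * (f z).toReal := by rw [hFq]
    have hRsum : Summable (fun z => (L2 - L1) * (m z).toReal + (-L2) * (f z).toReal) :=
      (hMsum.mul_left _).add (hFsum.mul_left _)
    have hLsum : Summable (fun z => (f z).toReal * binEnt2 (p z)) :=
      Summable.of_nonneg_of_le hnn key hRsum
    have hsum_le : condEnt2 μ A Z ≤ (L2 - L1) * S + (-L2) := by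
      rw [hCE]
      calc ∑' z, (f z).toReal * binEnt2 (p z)
          ≤ ∑' z, ((L2 - L1) * (m z).toReal + (-L2) * (f z).toReal) :=
            Summable.tsum_le_tsum key hLsum hRsum
        _ = (L2 - L1) * S + (-L2) := by
            rw [Summable.tsum_add (hMsum.mul_left _) (hFsum.mul_left _), tsum_mul_left, tsum_mul_left,
              hFtot, hS_def]
            ring
    have hSt : S ≤ t := le_min hS_le_E hS_half
    have h2 : binEnt2 t = (L2 - L1) * t + (-L2) := by
      simp only [binEnt2, hL1_def, hL2_def]
      ring
    have hfinal : condEnt2 μ A Z ≤ binEnt2 t := by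
      have h1 : (L2 - L1) * S + (-L2) ≤ (L2 - L1) * t + (-L2) := by
        nlinarith [sub_nonneg.2 hL]
      rw [h2]; linarith
    have hCE0 : 0 ≤ condEnt2 μ A Z := by rw [hCE]; exact tsum_nonneg hnn
    calc invBinEnt2 (condEnt2 μ A Z) ≤ t := invBinEnt2_le ht0.le ht hCE0 hfinal
      _ ≤ _ := min_le_left _ _
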